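/- Let (a_1,…,a_m) be a telescopic sequence, S the numerical semigroup it generates, and let w_1 < w_2 < ⋯ < w_g be the gaps (the elements of ℤ_{≥0} \ S), where g ≥ 1. Then the largest gap satisfies w_g = 2g − 1. -/

import Mathlib

/-- `dseq a i = gcd(a_1, …, a_i)`. -/
def dseq (a : ℕ → ℕ) (i : ℕ) : ℕ := (Finset.Icc 1 i).gcd a

/-- The telescopic condition:
`a_i/d_i ∈ (a_1/d_{i-1})ℤ_{≥0} + ⋯ + (a_{i-1}/d_{i-1})ℤ_{≥0}` for `2 ≤ i ≤ m`. -/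
def Telescopic (m : ℕ) (a : ℕ → ℕ) : Prop :=
  ∀ i, 2 ≤ i → i ≤ m →
    ∃ k : ℕ → ℕ,
      a i / dseq a i = ∑ j ∈ Finset.Icc 1 (i - 1), (a j / dseq a (i - 1)) * k j

lemma dseq_dvd (a : ℕ → ℕ) {i j : ℕ} (h1 : 1 ≤ j) (h2 : j ≤ i) : dseq a i ∣ a j :=
  Finset.gcd_dvd (Finset.mem_Icc.mpr ⟨h1, h2⟩)

lemma dseq_dvd_dseq (a : ℕ → ℕ) {i i' : ℕ} (h : i ≤ i') : dseq a i' ∣ dseq a i :=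
  Finset.dvd_gcd fun j hj => Finset.gcd_dvd (Finset.Icc_subset_Icc_right h hj)

lemma dseq_pos (a : ℕ → ℕ) {i : ℕ} (ha : 0 < a 1) (hi : 1 ≤ i) : 0 < dseq a i := by
  rcases Nat.eq_zero_or_pos (dseq a i) with h | h
  · rw [dseq, Finset.gcd_eq_zero_iff] at h
    exact absurd (h 1 (Finset.mem_Icc.mpr ⟨le_refl 1, hi⟩)) (by omega)
  · exact h

lemma dseq_succ (a : ℕ → ℕ) {i : ℕ} (hi : 2 ≤ i) :
    dseq a i = Nat.gcd (a i) (dseq a (i-1)) := by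
  have : Finset.Icc 1 i = insert i (Finset.Icc 1 (i-1)) := by
    ext j; simp [Finset.mem_Icc, Finset.mem_insert]; omega
  rw [dseq, this, Finset.gcd_insert, dseq]
  rfl

lemma dseq_one (a : ℕ → ℕ) : dseq a 1 = a 1 := by
  rw [dseq, Finset.Icc_self, Finset.gcd_singleton]; simp

/-- `C a j` is `d_{j-1}/d_j`. -/
def Cc (a : ℕ → ℕ) (j : ℕ) : ℕ := dseq a (j-1) / dseq a j

lemma Cc_pos (a : ℕ → ℕ) (ha : 0 < a 1) {j : ℕ} (hj : 2 ≤ j) : 0 < Cc a j := by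
  have hd : dseq a j ∣ dseq a (j-1) := dseq_dvd_dseq a (by omega)
  have h1 : 0 < dseq a (j-1) := dseq_pos a ha (by omega)
  exact Nat.div_pos (Nat.le_of_dvd h1 hd) (dseq_pos a ha (by omega))

lemma Cc_mul (a : ℕ → ℕ) {j : ℕ} (hj : 2 ≤ j) : Cc a j * dseq a j = dseq a (j-1) :=
  Nat.div_mul_cancel (dseq_dvd_dseq a (by omega))

/-- Reduction: any representation can be brought to one with bounded coordinates. -/
lemma reduce (m : ℕ) (a : ℕ → ℕ) (ha : 0 < a 1)
    (hkey : ∀ i, 2 ≤ i → i ≤ m →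
      ∃ k : ℕ → ℕ, Cc a i * a i = ∑ j ∈ Finset.Icc 1 (i-1), a j * k j) :
    ∀ i, i ≤ m → ∀ x : ℕ → ℕ, ∃ y : ℕ → ℕ,
      (∑ j ∈ Finset.Icc 1 m, a j * y j = ∑ j ∈ Finset.Icc 1 m, a j * x j) ∧
      (∀ j, 2 ≤ j → j ≤ i → y j < Cc a j) ∧
      (∀ j, i < j → y j = x j) := by
  intro i
  induction i with
  | zero => intro _ x; exact ⟨x, rfl, by omega, fun _ _ => rfl⟩
  | succ n ih =>
    intro hnm x
    rcases Nat.lt_or_ge n 1 with hn | hn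
    · interval_cases n
      exact ⟨x, rfl, by omega, fun _ _ => rfl⟩
    · -- n + 1 ≥ 2
      obtain ⟨k, hk⟩ := hkey (n+1) (by omega) hnm
      set c := Cc a (n+1) with hc
      have hcpos : 0 < c := Cc_pos a ha (by omega)
      set q := x (n+1) / c with hq
      set r := x (n+1) % c with hr
      set x' : ℕ → ℕ := fun j => if j = n+1 then r else if 1 ≤ j ∧ j ≤ n then x j + q * k j else x j with hx'
      have hsum : ∑ j ∈ Finset.Icc 1 m, a j * x' j = ∑ j ∈ Finset.Icc 1 m, a j * x j := by
        have hsplit : ∀ z : ℕ → ℕ, ∑ j ∈ Finset.Icc 1 m, a j * z j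
            = (∑ j ∈ Finset.Icc 1 n, a j * z j) + a (n+1) * z (n+1)
              + ∑ j ∈ Finset.Icc (n+2) m, a j * z j := by
          intro z
          have h1 : Finset.Icc 1 m = Finset.Icc 1 (n+1) ∪ Finset.Icc (n+2) m := by
            ext j; simp [Finset.mem_Icc, Finset.mem_union]; omega
          have h2 : Disjoint (Finset.Icc 1 (n+1)) (Finset.Icc (n+2) m) := by
            rw [Finset.disjoint_left]; intro j hj1 hj2
            simp [Finset.mem_Icc] at hj1 hj2; omega
          have h3 : Finset.Icc 1 (n+1) = insert (n+1) (Finset.Icc 1 n) := by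
            ext j; simp [Finset.mem_Icc]; omega
          rw [h1, Finset.sum_union h2, h3, Finset.sum_insert (by simp only [Finset.mem_Icc]; omega)]
          ring
        rw [hsplit, hsplit]
        have e1 : ∀ j ∈ Finset.Icc 1 n, a j * x' j = a j * x j + q * (a j * k j) := by
          intro j hj; simp only [Finset.mem_Icc] at hj
          have : x' j = x j + q * k j := by
            simp only [hx']; rw [if_neg (by omega), if_pos ⟨hj.1, hj.2⟩]
          rw [this]; ring
        have e2 : x' (n+1) = r := by simp [hx']
        have e3 : ∀ j ∈ Finset.Icc (n+2) m, a j * x' j = a j * x j := by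
          intro j hj; simp only [Finset.mem_Icc] at hj
          have : x' j = x j := by simp only [hx']; rw [if_neg (by omega), if_neg (by omega)]
          rw [this]
        rw [Finset.sum_congr rfl e1, Finset.sum_congr rfl e3, e2, Finset.sum_add_distrib,
          ← Finset.mul_sum]
        have hkk : ∑ j ∈ Finset.Icc 1 n, a j * k j = c * a (n+1) := by
          have := hk; simp only [Nat.add_sub_cancel] at this; omega
        have hx1 : x (n+1) = c * q + r := (Nat.div_add_mod (x (n+1)) c).symm
        rw [hkk, hx1]; ring
      obtain ⟨y, hy1, hy2, hy3⟩ := ih (by omega) x'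
      refine ⟨y, by rw [hy1, hsum], ?_, ?_⟩
      · intro j hj2 hjn1
        rcases Nat.lt_or_ge j (n+1) with h | h
        · exact hy2 j hj2 (by omega)
        · have hj : j = n+1 := by omega
          rw [hj, hy3 (n+1) (by omega)]
          simp only [hx', if_pos rfl]
          exact Nat.mod_lt _ hcpos
      · intro j hj
        rw [hy3 j (by omega)]
        simp only [hx']; rw [if_neg (by omega), if_neg (by omega)]

lemma key (m : ℕ) (a : ℕ → ℕ) (htel : Telescopic m a) {i : ℕ} (hi : 2 ≤ i) (him : i ≤ m) :
    ∃ k : ℕ → ℕ, Cc a i * a i = ∑ j ∈ Finset.Icc 1 (i-1), a j * k j := by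
  obtain ⟨k, hk⟩ := htel i hi him
  refine ⟨k, ?_⟩
  show (dseq a (i-1) / dseq a i) * a i = _
  have h1 : dseq a i ∣ a i := dseq_dvd a (by omega) le_rfl
  have h2 : dseq a i ∣ dseq a (i-1) := dseq_dvd_dseq a (by omega)
  have := congrArg (fun t => dseq a (i-1) * t) hk
  simp only [Finset.mul_sum] at this
  calc (dseq a (i-1) / dseq a i) * a i
      = dseq a (i-1) * (a i / dseq a i) := by
        obtain ⟨u, hu⟩ := h2
        obtain ⟨v, hv⟩ := h1
        rcases Nat.eq_zero_or_pos (dseq a i) with h0 | h0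
        · simp [hu, hv, h0]
        · rw [hu, hv, Nat.mul_div_cancel_left _ h0, Nat.mul_div_cancel_left _ h0]; ring
    _ = ∑ j ∈ Finset.Icc 1 (i-1), a j * k j := by
        rw [this]
        refine Finset.sum_congr rfl fun j hj => ?_
        rw [Finset.mem_Icc] at hj
        rw [← mul_assoc, Nat.mul_div_cancel' (dseq_dvd a hj.1 hj.2)]

lemma prod_c (a : ℕ → ℕ) (ha : 0 < a 1) :
    ∀ i, 1 ≤ i → (∏ j ∈ Finset.Icc 2 i, Cc a j) * dseq a i = dseq a 1 := by
  intro i hi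
  induction i with
  | zero => omega
  | succ n ih =>
    rcases Nat.lt_or_ge n 1 with h | h
    · interval_cases n
      · simp
    · have hins : Finset.Icc 2 (n+1) = insert (n+1) (Finset.Icc 2 n) := by
        ext j; simp [Finset.mem_Icc]; omega
      rw [hins, Finset.prod_insert (by simp [Finset.mem_Icc])]
      have hd : dseq a (n+1) ∣ dseq a n := dseq_dvd_dseq a (by omega)
      have hp : 0 < dseq a (n+1) := dseq_pos a ha (by omega)
      have : Cc a (n+1) * dseq a (n+1) = dseq a n := by
        simp only [Cc, Nat.add_sub_cancel]
        exact Nat.div_mul_cancel hd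
      rw [mul_assoc, mul_left_comm, this, ih h]

lemma uniq (a : ℕ → ℕ) (ha : 0 < a 1) :
    ∀ i, 1 ≤ i → ∀ x y : ℕ → ℕ,
    (∀ j, 2 ≤ j → j ≤ i → x j < Cc a j ∧ y j < Cc a j) →
    ((a 1 : ℤ) ∣ (∑ j ∈ Finset.Icc 2 i, (a j : ℤ) * x j) - ∑ j ∈ Finset.Icc 2 i, (a j : ℤ) * y j) →
    ∀ j, 2 ≤ j → j ≤ i → x j = y j := by
  intro i
  induction i with
  | zero => omega
  | succ n ih =>
    intro _ x y hbnd hdvd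
    rcases Nat.lt_or_ge n 1 with hn | hn
    · interval_cases n
      · omega
    · -- n ≥ 1, so n+1 ≥ 2
      have hins : Finset.Icc 2 (n+1) = insert (n+1) (Finset.Icc 2 n) := by
        ext j; simp only [Finset.mem_Icc, Finset.mem_insert]; omega
      have hnotmem : (n+1) ∉ Finset.Icc 2 n := by simp only [Finset.mem_Icc]; omega
      rw [hins, Finset.sum_insert hnotmem, Finset.sum_insert hnotmem] at hdvd
      set D := dseq a n with hD
      set e := dseq a (n+1) with he
      have hDpos : 0 < D := dseq_pos a ha (by omega)
      have hepos : 0 < e := dseq_pos a ha (by omega)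
      have hge : Nat.gcd (a (n+1)) D = e := by
        rw [he, dseq_succ a (show 2 ≤ n+1 by omega)]; simp; rfl
      set c := Cc a (n+1) with hc
      have hcDe : c = D / e := by simp [hc, Cc]; rfl
      have heD : e ∣ D := by rw [← hge]; exact Nat.gcd_dvd_right _ _
      have hea : e ∣ a (n+1) := by rw [← hge]; exact Nat.gcd_dvd_left _ _
      have hDc : D = e * c := by rw [hcDe]; exact (Nat.mul_div_cancel' heD).symm
      -- D divides the whole difference
      have hDa1 : D ∣ a 1 := by
        have := dseq_dvd_dseq a (show 1 ≤ n by omega)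
        rwa [dseq_one] at this
      have hDdvd : (D : ℤ) ∣ ((a (n+1) : ℤ) * x (n+1) + ∑ j ∈ Finset.Icc 2 n, (a j : ℤ) * x j)
          - ((a (n+1) : ℤ) * y (n+1) + ∑ j ∈ Finset.Icc 2 n, (a j : ℤ) * y j) :=
        dvd_trans (Int.natCast_dvd_natCast.mpr hDa1) hdvd
      have hDsum : ∀ z : ℕ → ℕ, (D : ℤ) ∣ ∑ j ∈ Finset.Icc 2 n, (a j : ℤ) * z j := by
        intro z
        refine Finset.dvd_sum fun j hj => ?_
        simp only [Finset.mem_Icc] at hj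
        exact Dvd.dvd.mul_right (Int.natCast_dvd_natCast.mpr (dseq_dvd a (by omega) hj.2)) _
      have hDt : (D : ℤ) ∣ (a (n+1) : ℤ) * ((x (n+1) : ℤ) - y (n+1)) := by
        have h1 := hDsum x
        have h2 := hDsum y
        have : (a (n+1) : ℤ) * ((x (n+1) : ℤ) - y (n+1))
            = (((a (n+1) : ℤ) * x (n+1) + ∑ j ∈ Finset.Icc 2 n, (a j : ℤ) * x j)
              - ((a (n+1) : ℤ) * y (n+1) + ∑ j ∈ Finset.Icc 2 n, (a j : ℤ) * y j))
              - (∑ j ∈ Finset.Icc 2 n, (a j : ℤ) * x j) + ∑ j ∈ Finset.Icc 2 n, (a j : ℤ) * y j := by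
          ring
        rw [this]
        exact dvd_add (dvd_sub hDdvd h1) h2
      -- cancel e
      obtain ⟨b, hb⟩ := hea
      have hct : (c : ℤ) ∣ (b : ℤ) * ((x (n+1) : ℤ) - y (n+1)) := by
        have : ((e : ℤ) * c) ∣ (e : ℤ) * ((b : ℤ) * ((x (n+1) : ℤ) - y (n+1))) := by
          rw [← mul_assoc]
          have : ((e : ℤ) * b) = (a (n+1) : ℤ) := by exact_mod_cast hb.symm
          rw [this]
          exact_mod_cast hDc ▸ hDt
        exact (mul_dvd_mul_iff_left (by exact_mod_cast hepos.ne' : (e:ℤ) ≠ 0)).mp this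
      have hcop : Nat.Coprime c b := by
        have h := Nat.coprime_div_gcd_div_gcd (m := a (n+1)) (n := D) (by rw [hge]; exact hepos)
        rw [hge] at h
        have hbe : b = a (n+1) / e := by rw [hb]; exact (Nat.mul_div_cancel_left _ hepos).symm
        rw [hcDe, hbe]
        exact h.symm
      have hcdvd : (c : ℤ) ∣ ((x (n+1) : ℤ) - y (n+1)) := by
        have : IsCoprime (c : ℤ) (b : ℤ) := Int.isCoprime_iff_gcd_eq_one.mpr (by
          simpa [Int.gcd_natCast_natCast] using hcop)
        exact this.dvd_of_dvd_mul_left hct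
      have hxy : x (n+1) = y (n+1) := by
        obtain ⟨hx1, hy1⟩ := hbnd (n+1) (by omega) le_rfl
        by_contra hne
        have hne' : (x (n+1) : ℤ) - y (n+1) ≠ 0 := by
          intro h; apply hne; omega
        have hle := Int.le_of_dvd (abs_pos.mpr hne') ((dvd_abs _ _).mpr hcdvd)
        have hxc : (x (n+1) : ℤ) < c := by rw [hc]; exact_mod_cast hx1
        have hyc : (y (n+1) : ℤ) < c := by rw [hc]; exact_mod_cast hy1
        have h2 : |(x (n+1) : ℤ) - y (n+1)| < c := abs_sub_lt_iff.mpr ⟨by omega, by omega⟩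
        exact absurd h2 (not_lt.mpr hle)
      intro j hj2 hjn
      rcases Nat.lt_or_ge j (n+1) with h | h
      · refine ih hn x y (fun j' h2 h3 => hbnd j' h2 (by omega)) ?_ j hj2 (by omega)
        have : ((a (n+1) : ℤ) * x (n+1)) = ((a (n+1) : ℤ) * y (n+1)) := by rw [hxy]
        have heq : ((a (n+1):ℤ) * x (n+1) + ∑ j ∈ Finset.Icc 2 n, (a j : ℤ) * x j)
            - ((a (n+1):ℤ) * y (n+1) + ∑ j ∈ Finset.Icc 2 n, (a j : ℤ) * y j)
            = (∑ j ∈ Finset.Icc 2 n, (a j : ℤ) * x j) - ∑ j ∈ Finset.Icc 2 n, (a j : ℤ) * y j := by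
          rw [this]; ring
        rwa [heq] at hdvd
      · have : j = n+1 := by omega
        rw [this]; exact hxy

lemma exists_rep (m : ℕ) (a : ℕ → ℕ) (ha : 0 < a 1) (hm : 1 ≤ m) (hgm : dseq a m = 1) :
    ∀ n : ℕ, ∃ x : ℕ → ℕ, (∀ j, 2 ≤ j → j ≤ m → x j < Cc a j) ∧
      (∑ j ∈ Finset.Icc 2 m, a j * x j) % (a 1) = n % (a 1) := by
  have hA : 0 < a 1 := ha
  haveI : NeZero (a 1) := ⟨hA.ne'⟩
  set s := Finset.Icc 2 m with hs
  set ext : (∀ j : s, Fin (Cc a j)) → ℕ → ℕ :=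
    fun v j => if h : j ∈ s then (v ⟨j, h⟩ : ℕ) else 0 with hext
  set Φ : (∀ j : s, Fin (Cc a j)) → ZMod (a 1) :=
    fun v => ((∑ j ∈ s, a j * ext v j : ℕ) : ZMod (a 1)) with hΦ
  have hbnd : ∀ v : (∀ j : s, Fin (Cc a j)), ∀ j, 2 ≤ j → j ≤ m → ext v j < Cc a j := by
    intro v j h2 h3
    have hj : j ∈ s := by simp [hs, Finset.mem_Icc]; omega
    simp only [hext, dif_pos hj]
    exact (v ⟨j, hj⟩).isLt
  have hinj : Function.Injective Φ := by
    intro v w hvw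
    simp only [hΦ] at hvw
    rw [ZMod.natCast_eq_natCast_iff] at hvw
    have hdvd : (a 1 : ℤ) ∣ (∑ j ∈ Finset.Icc 2 m, (a j : ℤ) * (ext v j))
        - ∑ j ∈ Finset.Icc 2 m, (a j : ℤ) * (ext w j) := by
      have := (Nat.modEq_iff_dvd (n := a 1)).mp hvw
      push_cast at this ⊢
      rw [← hs]
      exact dvd_sub_comm.mp this
    have := uniq a ha m hm (ext v) (ext w)
      (fun j h2 h3 => ⟨hbnd v j h2 h3, hbnd w j h2 h3⟩) hdvd
    funext j
    obtain ⟨hj2, hj3⟩ : 2 ≤ (j : ℕ) ∧ (j : ℕ) ≤ m := by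
      exact Finset.mem_Icc.mp j.2
    have heq := this j hj2 hj3
    simp only [hext, dif_pos j.2] at heq
    exact Fin.ext (by simpa using heq)
  have hcard : Fintype.card (∀ j : s, Fin (Cc a j)) = Fintype.card (ZMod (a 1)) := by
    rw [Fintype.card_pi, ZMod.card]
    simp only [Fintype.card_fin]
    rw [Finset.prod_coe_sort s (fun j => Cc a j)]
    have := prod_c a ha m hm
    rw [hgm, mul_one, dseq_one] at this
    exact this
  have hbij : Function.Bijective Φ :=
    (Fintype.bijective_iff_injective_and_card Φ).mpr ⟨hinj, hcard⟩
  intro n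
  obtain ⟨v, hv⟩ := hbij.2 ((n : ℕ) : ZMod (a 1))
  refine ⟨ext v, hbnd v, ?_⟩
  have : ((∑ j ∈ s, a j * ext v j : ℕ) : ZMod (a 1)) = ((n : ℕ) : ZMod (a 1)) := hv
  rw [ZMod.natCast_eq_natCast_iff] at this
  exact this

/-- For a telescopic sequence with `g ≥ 1` gaps, the largest gap of the
numerical semigroup `S = a_1 ℤ_{≥0} + ⋯ + a_m ℤ_{≥0}` equals `2g - 1`. -/
theorem telescopic_largest_gap
    (m : ℕ) (hm : 2 ≤ m) (a : ℕ → ℕ)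
    (hpos : ∀ i, 1 ≤ i → i ≤ m → 0 < a i)
    (hgcd : (Finset.Icc 1 m).gcd a = 1)
    (htel : Telescopic m a)
    (g : ℕ)
    (hg : g = Set.ncard {n : ℕ | ¬ ∃ x : ℕ → ℕ, n = ∑ i ∈ Finset.Icc 1 m, a i * x i})
    (hg1 : 1 ≤ g) :
    IsGreatest {n : ℕ | ¬ ∃ x : ℕ → ℕ, n = ∑ i ∈ Finset.Icc 1 m, a i * x i}
      (2 * g - 1) := by
  set Sg := {n : ℕ | ¬ ∃ x : ℕ → ℕ, n = ∑ i ∈ Finset.Icc 1 m, a i * x i} with hSg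
  have ha1 : 0 < a 1 := hpos 1 le_rfl (by omega)
  have hgm : dseq a m = 1 := hgcd
  set A := a 1 with hA
  have hex := exists_rep m a ha1 (by omega) hgm
  set xc : ℕ → ℕ → ℕ := fun n => (hex n).choose with hxc
  have Fbnd : ∀ n j, 2 ≤ j → j ≤ m → xc n j < Cc a j := fun n => (hex n).choose_spec.1
  set F : ℕ → ℕ := fun n => ∑ j ∈ Finset.Icc 2 m, a j * xc n j with hF
  have Fmod : ∀ n, F n % A = n % A := fun n => (hex n).choose_spec.2
  -- uniqueness of bounded representations
  have uniqF : ∀ n (x : ℕ → ℕ), (∀ j, 2 ≤ j → j ≤ m → x j < Cc a j) →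
      (∑ j ∈ Finset.Icc 2 m, a j * x j) % A = n % A →
      ∑ j ∈ Finset.Icc 2 m, a j * x j = F n := by
    intro n x hb hmod
    have hmod2 : (∑ j ∈ Finset.Icc 2 m, a j * x j) ≡ (F n) [MOD A] :=
      hmod.trans (Fmod n).symm
    have hdvd : (A : ℤ) ∣ (∑ j ∈ Finset.Icc 2 m, (a j : ℤ) * x j)
        - ∑ j ∈ Finset.Icc 2 m, (a j : ℤ) * xc n j := by
      have h := (Nat.modEq_iff_dvd (n := A)).mp hmod2
      rw [show F n = ∑ j ∈ Finset.Icc 2 m, a j * xc n j from rfl] at h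
      push_cast at h
      exact dvd_sub_comm.mp h
    have heq := uniq a ha1 m (by omega) x (xc n)
      (fun j h2 h3 => ⟨hb j h2 h3, Fbnd n j h2 h3⟩) hdvd
    exact Finset.sum_congr rfl fun j hj => by
      rw [Finset.mem_Icc] at hj; rw [heq j hj.1 hj.2]
  have hFrep : ∀ x : ℕ → ℕ, (∀ j, 2 ≤ j → j ≤ m → x j < Cc a j) →
      F (∑ j ∈ Finset.Icc 2 m, a j * x j) = ∑ j ∈ Finset.Icc 2 m, a j * x j :=
    fun x hb => (uniqF _ x hb rfl).symm
  have hFcongr : ∀ n n', n % A = n' % A → F n = F n' := by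
    intro n n' h
    have := uniqF n' (xc n) (Fbnd n) ((Fmod n).trans h)
    rw [← this]
  set T : ℕ := ∑ j ∈ Finset.Icc 2 m, a j * (Cc a j - 1) with hT
  have hFle : ∀ n, F n ≤ T := by
    intro n
    refine Finset.sum_le_sum fun j hj => ?_
    rw [Finset.mem_Icc] at hj
    exact Nat.mul_le_mul_left _ (by have := Fbnd n j hj.1 hj.2; omega)
  have hFT : F T = T := by
    have hb : ∀ j, 2 ≤ j → j ≤ m → Cc a j - 1 < Cc a j :=
      fun j h2 _ => by have := Cc_pos a ha1 h2; omega
    exact hFrep (fun j => Cc a j - 1) hb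
  -- membership characterization
  have hchar : ∀ n : ℕ, (∃ x : ℕ → ℕ, n = ∑ i ∈ Finset.Icc 1 m, a i * x i) ↔ F n ≤ n := by
    have hins : Finset.Icc 1 m = insert 1 (Finset.Icc 2 m) := by
      ext j; simp only [Finset.mem_Icc, Finset.mem_insert]; omega
    have hnm : (1 : ℕ) ∉ Finset.Icc 2 m := by simp only [Finset.mem_Icc]; omega
    intro n
    constructor
    · rintro ⟨x, rfl⟩
      obtain ⟨y, hy1, hy2, -⟩ := reduce m a ha1 (fun i h2 h3 => key m a htel h2 h3) m le_rfl x
      rw [← hy1, hins, Finset.sum_insert hnm]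
      have hF2 : F (a 1 * y 1 + ∑ j ∈ Finset.Icc 2 m, a j * y j)
          = ∑ j ∈ Finset.Icc 2 m, a j * y j :=
        (uniqF _ y (fun j h2 h3 => hy2 j h2 h3) (by rw [Nat.mul_add_mod])).symm
      rw [hF2]
      exact Nat.le_add_left _ _
    · intro h
      have hdvd : A ∣ n - F n := (Nat.modEq_iff_dvd' h).mp (Fmod n)
      obtain ⟨t, ht⟩ := hdvd
      set x' : ℕ → ℕ := fun j => if j = 1 then t else xc n j with hx'
      refine ⟨x', ?_⟩
      rw [hins, Finset.sum_insert hnm]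
      have e0 : x' 1 = t := by simp [hx']
      have e1 : ∑ j ∈ Finset.Icc 2 m, a j * x' j
          = ∑ j ∈ Finset.Icc 2 m, a j * xc n j := by
        refine Finset.sum_congr rfl fun j hj => ?_
        rw [Finset.mem_Icc] at hj
        simp only [hx']
        rw [if_neg (by omega)]
      rw [e0, e1]
      show n = A * t + ∑ j ∈ Finset.Icc 2 m, a j * xc n j
      have hFn2 : F n = ∑ j ∈ Finset.Icc 2 m, a j * xc n j := rfl
      omega
  -- decomposition of F r for r < A
  have hFdec : ∀ r, r < A → F r = A * (F r / A) + r := by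
    intro r hr
    have h1 := Nat.div_add_mod (F r) A
    have h2 : F r % A = r := by rw [Fmod r, Nat.mod_eq_of_lt hr]
    omega
  -- the gap set as a Finset
  set Gfin : Finset ℕ := (Finset.range A).biUnion
    (fun r => (Finset.range (F r / A)).image (fun k => A * k + r)) with hGfin
  have hmemG : ∀ n : ℕ, n ∈ Gfin ↔ n < F n := by
    intro n
    simp only [hGfin, Finset.mem_biUnion, Finset.mem_image, Finset.mem_range]
    constructor
    · rintro ⟨r, hr, k, hk, rfl⟩
      have hcong : F (A * k + r) = F r := hFcongr _ r (by rw [Nat.mul_add_mod])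
      rw [hcong, hFdec r hr]
      have h5 : A * (k+1) ≤ A * (F r / A) := Nat.mul_le_mul_left A hk
      have h6 : A * (k+1) = A * k + A := by ring
      omega
    · intro hn
      refine ⟨n % A, Nat.mod_lt _ ha1, n / A, ?_, Nat.div_add_mod n A⟩
      have hcong : F n = F (n % A) := hFcongr n (n % A) (Nat.mod_mod_of_dvd n dvd_rfl).symm
      have hd := hFdec (n % A) (Nat.mod_lt _ ha1)
      have h1 := Nat.div_add_mod n A
      rw [hcong, hd] at hn
      by_contra hc
      push_neg at hc
      have : A * (F (n % A) / A) ≤ A * (n / A) := Nat.mul_le_mul_left A hc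
      omega
  have hsetG : Sg = ↑Gfin := by
    rw [hSg]
    ext n
    simp only [Set.mem_setOf_eq, Finset.coe_sort_coe, Finset.mem_coe, hmemG n, hchar n]
    omega
  set G : ℕ := ∑ r ∈ Finset.range A, F r / A with hG
  have hcardG : Gfin.card = G := by
    rw [hGfin, Finset.card_biUnion]
    · refine Finset.sum_congr rfl fun r hr => ?_
      rw [Finset.card_image_of_injective _ (fun k1 k2 h =>
        Nat.eq_of_mul_eq_mul_left ha1 (by omega : A * k1 = A * k2)), Finset.card_range]
    · intro r1 h1 r2 h2 hne
      rw [Finset.mem_coe, Finset.mem_range] at h1 h2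
      rw [Function.onFun, Finset.disjoint_left]
      rintro n hn1 hn2
      simp only [Finset.mem_image, Finset.mem_range] at hn1 hn2
      obtain ⟨k1, -, e1⟩ := hn1
      obtain ⟨k2, -, e2⟩ := hn2
      apply hne
      have : (A * k1 + r1) % A = (A * k2 + r2) % A := by rw [e1, e2]
      rw [Nat.mul_add_mod, Nat.mul_add_mod, Nat.mod_eq_of_lt h1, Nat.mod_eq_of_lt h2] at this
      exact this
  have hgG : g = G := by rw [hg, hsetG, Set.ncard_coe_finset, hcardG]
  -- the symmetry involution
  set σ : ℕ → ℕ := fun r => (T - F r) % A with hσ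
  have hFσ : ∀ r, F (σ r) = T - F r := by
    intro r
    have h1 : F (σ r) = F (T - F r) := hFcongr _ _ (Nat.mod_mod_of_dvd _ dvd_rfl)
    set y : ℕ → ℕ := fun j => Cc a j - 1 - xc r j with hy
    have hsum : ∑ j ∈ Finset.Icc 2 m, a j * y j = T - F r := by
      have hadd : ∑ j ∈ Finset.Icc 2 m, a j * y j + F r = T := by
        rw [hF, hT, ← Finset.sum_add_distrib]
        refine Finset.sum_congr rfl fun j hj => ?_
        rw [Finset.mem_Icc] at hj
        have hb := Fbnd r j hj.1 hj.2
        have : y j + xc r j = Cc a j - 1 := by simp only [hy]; omega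
        rw [← Nat.mul_add, this]
      omega
    have hby : ∀ j, 2 ≤ j → j ≤ m → y j < Cc a j := by
      intro j h2 h3
      have := Cc_pos a ha1 h2
      simp only [hy]; omega
    rw [h1, ← hsum, hFrep y hby]
  have hσmem : ∀ r, σ r < A := fun r => Nat.mod_lt _ ha1
  have hσσ : ∀ r, r < A → σ (σ r) = r := by
    intro r hr
    have h1 : σ (σ r) = (T - F (σ r)) % A := rfl
    rw [h1, hFσ r, Nat.sub_sub_self (hFle r)]
    rw [Fmod r, Nat.mod_eq_of_lt hr]
  have hsum_inv : ∑ r ∈ Finset.range A, F r = ∑ r ∈ Finset.range A, (T - F r) := by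
    refine Finset.sum_nbij' (fun r => σ r) (fun r => σ r) ?_ ?_ ?_ ?_ ?_
    · intro r hr; exact Finset.mem_range.mpr (hσmem r)
    · intro r hr; exact Finset.mem_range.mpr (hσmem r)
    · intro r hr; exact hσσ r (Finset.mem_range.mp hr)
    · intro r hr; exact hσσ r (Finset.mem_range.mp hr)
    · intro r hr
      show F r = T - F (σ r)
      rw [hFσ r, Nat.sub_sub_self (hFle r)]
  have h2S : 2 * (∑ r ∈ Finset.range A, F r) = A * T := by
    have : ∑ r ∈ Finset.range A, F r + ∑ r ∈ Finset.range A, (T - F r)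
        = ∑ r ∈ Finset.range A, T := by
      rw [← Finset.sum_add_distrib]
      exact Finset.sum_congr rfl fun r _ => by have := hFle r; omega
    rw [Finset.sum_const, Finset.card_range, smul_eq_mul] at this
    omega
  have hS1 : ∑ r ∈ Finset.range A, F r = A * G + ∑ r ∈ Finset.range A, r := by
    rw [hG, Finset.mul_sum, ← Finset.sum_add_distrib]
    exact Finset.sum_congr rfl fun r hr => hFdec r (Finset.mem_range.mp hr)
  have hgauss : (∑ r ∈ Finset.range A, r) * 2 = A * (A - 1) := Finset.sum_range_id_mul_two A
  -- T = 2g + A - 1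
  have hTg : T = 2 * g + A - 1 := by
    have h := h2S
    rw [hS1] at h
    set B := A - 1 with hB
    have e1 : A * (2 * G + B) = 2 * (A * G) + A * B := by ring
    have hgauss' : (∑ r ∈ Finset.range A, r) * 2 = A * B := hgauss
    have e2 : A * T = A * (2 * G + B) := by omega
    have hT2 : T = 2 * G + B := Nat.eq_of_mul_eq_mul_left ha1 e2
    omega
  constructor
  · show (2*g-1) ∈ Sg
    rw [hSg]
    simp only [Set.mem_setOf_eq]
    rw [hchar]
    have hcong : F (2*g-1) = F T := hFcongr _ _ (by
      have : T = (2*g-1) + A := by omega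
      rw [this, Nat.add_mod_right])
    rw [hcong, hFT]
    omega
  · intro n hn
    rw [hSg] at hn
    simp only [Set.mem_setOf_eq] at hn
    rw [hchar] at hn
    push_neg at hn
    have h1 : A ∣ F n - n := (Nat.modEq_iff_dvd' (le_of_lt hn)).mp (Fmod n).symm
    have h2 : A ≤ F n - n := Nat.le_of_dvd (by omega) h1
    have h3 := hFle n
    omega
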